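/- Suppose g has a positive and finite limit at infinity, g(∞) := lim_{r→∞} g(r) with 0 < g(∞) < ∞, and let μ be a Borel measure on ℝⁿ with 0 < μ(ℝⁿ) < ∞. Then the renormalized energy 𝓔(x) = ∫_{ℝⁿ} (Γ(x+y) − Γ(y)) dμ(y) is finite for every x ∈ ℝⁿ, and 𝓔(x) → ∞ as |x| → ∞. -/

import Mathlib

open MeasureTheory Filter Set Topology

/-- The energy kernel `Γ(x) = G(|x|)`, where `G(r) = ∫₀^r g(s) ds`. -/
noncomputable def Gam {n : ℕ} (g : ℝ → ℝ)
    (x : EuclideanSpace ℝ (Fin n)) : ℝ :=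
  ∫ s in (0:ℝ)..‖x‖, g s

set_option maxHeartbeats 1000000 in
theorem renormalized_energy_finite_and_coercive {n : ℕ} (hn : 1 ≤ n)
    (g : ℝ → ℝ) (hg_cont : ContinuousOn g (Ici 0)) (hg0 : g 0 = 0)
    (ginf : ℝ) (hginf_pos : 0 < ginf) (hg_lim : Tendsto g atTop (𝓝 ginf))
    (μ : Measure (EuclideanSpace ℝ (Fin n)))
    (hμpos : 0 < μ Set.univ) (hμfin : μ Set.univ < ⊤) :
    (∀ x : EuclideanSpace ℝ (Fin n),
      Integrable (fun y => Gam g (x + y) - Gam g y) μ) ∧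
    Tendsto (fun x : EuclideanSpace ℝ (Fin n) => ∫ y, (Gam g (x + y) - Gam g y) ∂μ)
      (comap (fun x : EuclideanSpace ℝ (Fin n) => ‖x‖) atTop) atTop := by
  classical
  haveI : IsFiniteMeasure μ := ⟨hμfin⟩
  set V := EuclideanSpace ℝ (Fin n)
  -- extend g continuously to ℝ
  set g' : ℝ → ℝ := fun s => g (max s 0) with hg'def
  have hg'cont : Continuous g' :=
    hg_cont.comp_continuous (continuous_id.max continuous_const)
      (fun s => Set.mem_Ici.mpr (le_max_right _ _))
  have hg'eq : ∀ s : ℝ, 0 ≤ s → g' s = g s := by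
    intro s hs; simp [hg'def, max_eq_left hs]
  have hg'int : ∀ a b : ℝ, IntervalIntegrable g' volume a b :=
    fun a b => hg'cont.intervalIntegrable a b
  have hGam : ∀ x : V, Gam g x = ∫ s in (0:ℝ)..‖x‖, g' s := by
    intro x
    refine (intervalIntegral.integral_congr ?_).symm
    intro s hs
    rw [uIcc_of_le (norm_nonneg x)] at hs
    exact hg'eq s hs.1
  -- bound M on |g'|
  have hg'lim : Tendsto g' atTop (𝓝 ginf) := by
    refine hg_lim.congr' ?_
    filter_upwards [eventually_ge_atTop (0:ℝ)] with s hs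
    exact (hg'eq s hs).symm
  obtain ⟨R₀, hR₀⟩ := (Metric.tendsto_nhds.mp hg'lim 1 one_pos).exists_forall_of_atTop
  obtain ⟨C, hC⟩ := isCompact_Icc.exists_bound_of_continuousOn
    (hg'cont.continuousOn : ContinuousOn g' (Icc (-(|R₀|+1)) (|R₀|+1)))
  set M : ℝ := max (max C (|ginf| + 1)) 1 with hMdef
  have hM1 : (1:ℝ) ≤ M := le_max_right _ _
  have hM0 : (0:ℝ) < M := lt_of_lt_of_le one_pos hM1
  have hMbound : ∀ s : ℝ, |g' s| ≤ M := by
    intro s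
    rcases le_or_gt s (|R₀|+1) with h | h
    · have hs' : s ∈ Icc (-(|R₀|+1)) (|R₀|+1) ∨ s < -(|R₀|+1) := by
        rcases le_or_gt (-(|R₀|+1)) s with h2 | h2
        · exact Or.inl ⟨h2, h⟩
        · exact Or.inr h2
      rcases hs' with hs' | hs'
      · exact le_trans (hC s hs') (le_trans (le_max_left _ _) (le_max_left _ _))
      · have : g' s = 0 := by
          have : max s 0 = 0 := max_eq_right (by nlinarith [abs_nonneg R₀])
          simp [hg'def, this, hg0]
        simp [this]; linarith
    · have hge : R₀ ≤ s := le_trans (le_trans (le_abs_self R₀) (by linarith)) h.le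
      have := hR₀ s hge
      rw [Real.dist_eq] at this
      have : |g' s| ≤ |ginf| + 1 := by
        have h1 := abs_sub_abs_le_abs_sub (g' s) ginf
        linarith
      exact le_trans this (le_trans (le_max_right _ _) (le_max_left _ _))
  -- the kernel as an interval integral
  have hker : ∀ x y : V,
      Gam g (x + y) - Gam g y = ∫ s in ‖y‖..‖x + y‖, g' s := by
    intro x y
    rw [hGam, hGam]
    exact intervalIntegral.integral_interval_sub_left (hg'int 0 ‖x+y‖) (hg'int 0 ‖y‖)
  -- uniform bound
  have hkerbound : ∀ x y : V, |Gam g (x + y) - Gam g y| ≤ M * ‖x‖ := by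
    intro x y
    rw [hker]
    have h1 : |∫ s in ‖y‖..‖x+y‖, g' s| ≤ M * |‖x+y‖ - ‖y‖| := by
      have := intervalIntegral.norm_integral_le_of_norm_le_const
        (a := ‖y‖) (b := ‖x+y‖) (C := M) (f := g')
        (fun s _ => by rw [Real.norm_eq_abs]; exact hMbound s)
      simpa [Real.norm_eq_abs] using this
    refine le_trans h1 ?_
    have h2 : |‖x+y‖ - ‖y‖| ≤ ‖x‖ := by
      have := abs_norm_sub_norm_le (x + y) y
      simpa using this
    nlinarith
  -- continuity of the kernel in y
  have hGamCont : Continuous (fun x : V => Gam g x) := by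
    have hF : Continuous (fun r : ℝ => ∫ s in (0:ℝ)..r, g' s) :=
      intervalIntegral.continuous_primitive hg'int 0
    have : Continuous (fun x : V => ∫ s in (0:ℝ)..‖x‖, g' s) :=
      hF.comp continuous_norm
    exact this.congr (fun x => (hGam x).symm)
  have hcont : ∀ x : V, Continuous (fun y : V => Gam g (x + y) - Gam g y) := by
    intro x
    exact ((hGamCont.comp (continuous_const.add continuous_id)).sub hGamCont)
  -- integrability
  have hint : ∀ x : V, Integrable (fun y => Gam g (x + y) - Gam g y) μ := by
    intro x
    refine Integrable.mono' (integrable_const (M * ‖x‖)) ((hcont x).aestronglyMeasurable) ?_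
    exact Filter.Eventually.of_forall (fun y => by
      simpa using hkerbound x y)
  refine ⟨hint, ?_⟩
  -- choose R with g' ≥ ginf/2 beyond R
  have hhalf : ∀ᶠ s in atTop, ginf / 2 < g' s :=
    hg'lim.eventually (eventually_gt_nhds (by linarith))
  obtain ⟨R₁, hR₁⟩ := hhalf.exists_forall_of_atTop
  set R : ℝ := max R₁ 0 with hRdef
  have hR0 : 0 ≤ R := le_max_right _ _
  have hRg : ∀ s : ℝ, R ≤ s → ginf / 2 ≤ g' s :=
    fun s hs => (hR₁ s (le_trans (le_max_left _ _) hs)).le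
  -- total mass
  set m : ℝ := (μ Set.univ).toReal with hmdef
  have hm0 : 0 < m := ENNReal.toReal_pos hμpos.ne' hμfin.ne
  set ε : ℝ := min (m / 2) (ginf * m / (8 * M)) with hεdef
  have hε0 : 0 < ε := lt_min (by linarith) (by positivity)
  -- tail sets
  have htail : ∃ ρ : ℝ, 0 ≤ ρ ∧ (μ {y : V | ρ ≤ ‖y‖}).toReal < ε := by
    have hmeas : ∀ j : ℕ, NullMeasurableSet {y : V | (j:ℝ) ≤ ‖y‖} μ :=
      fun j => (isClosed_le continuous_const continuous_norm).measurableSet.nullMeasurableSet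
    have hanti : Antitone (fun j : ℕ => {y : V | (j:ℝ) ≤ ‖y‖}) := by
      intro i j hij y hy
      have : (i:ℝ) ≤ (j:ℝ) := Nat.cast_le.mpr hij
      exact le_trans this hy
    have hiInter : (⋂ j : ℕ, {y : V | (j:ℝ) ≤ ‖y‖}) = ∅ := by
      ext y
      simp only [mem_iInter, mem_setOf_eq, mem_empty_iff_false, iff_false, not_forall, not_le]
      obtain ⟨j, hj⟩ := exists_nat_gt ‖y‖
      exact ⟨j, hj⟩
    have := MeasureTheory.tendsto_measure_iInter_atTop hmeas hanti
      ⟨0, (measure_lt_top μ _).ne⟩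
    rw [hiInter, measure_empty] at this
    have h2 := this.eventually (eventually_lt_nhds (show (0:ENNReal) < ENNReal.ofReal ε by
      exact ENNReal.ofReal_pos.mpr hε0))
    obtain ⟨j, hj⟩ := h2.exists
    exact ⟨j, Nat.cast_nonneg j, ENNReal.toReal_lt_of_lt_ofReal hj⟩
  obtain ⟨ρ, hρ0, hρ⟩ := htail
  set A : Set V := {y : V | ρ ≤ ‖y‖} with hAdef
  have hAmeas : MeasurableSet A :=
    (isClosed_le continuous_const continuous_norm).measurableSet
  set t : ℝ := (μ A).toReal with htdef
  set a : ℝ := (μ Aᶜ).toReal with hadef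
  have hat : a + t = m := by
    rw [hadef, htdef, hmdef, ← ENNReal.toReal_add (measure_lt_top μ _).ne (measure_lt_top μ _).ne]
    congr 1
    rw [add_comm]
    exact measure_add_measure_compl hAmeas
  have ht : t < ε := hρ
  have ht0 : 0 ≤ t := ENNReal.toReal_nonneg
  have ha0 : 0 ≤ a := ENNReal.toReal_nonneg
  have hεm : ε ≤ m / 2 := min_le_left _ _
  have hεM : ε ≤ ginf * m / (8 * M) := min_le_right _ _
  have ham : a ≥ m / 2 := by linarith
  have ham' : a ≤ m := by linarith
  set T : ℝ := max R ρ with hTdef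
  have hT0 : 0 ≤ T := le_trans hR0 (le_max_left _ _)
  have hTR : R ≤ T := le_max_left _ _
  have hTρ : ρ ≤ T := le_max_right _ _
  set c : ℝ := ginf * m / 8 with hcdef
  have hc : 0 < c := by positivity
  set Cc : ℝ := (ginf / 2) * m * (ρ + T) + M * T * m with hCcdef
  -- pointwise lower bound on the good set
  have hgood : ∀ x : V, ρ + T ≤ ‖x‖ → ∀ y : V, ¬ (ρ ≤ ‖y‖) →
      (ginf / 2) * (‖x‖ - ρ - T) - M * T ≤ Gam g (x + y) - Gam g y := by
    intro x hx y hy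
    push_neg at hy
    have hy0 : (0:ℝ) ≤ ‖y‖ := norm_nonneg y
    have hyT : ‖y‖ ≤ T := le_trans hy.le hTρ
    have hxy : ‖x‖ - ρ ≤ ‖x + y‖ := by
      have h1 : ‖x‖ ≤ ‖x + y‖ + ‖y‖ := by
        have h2 : ‖(x + y) - y‖ ≤ ‖x + y‖ + ‖y‖ := norm_sub_le _ _
        simpa using h2
      linarith
    have hbT : T ≤ ‖x + y‖ := by linarith
    rw [hker]
    rw [← intervalIntegral.integral_add_adjacent_intervals (hg'int ‖y‖ T) (hg'int T ‖x+y‖)]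
    have h1 : -M * (T - ‖y‖) ≤ ∫ s in ‖y‖..T, g' s := by
      have := intervalIntegral.integral_mono_on hyT
        (intervalIntegrable_const (c := -M)) (hg'int ‖y‖ T)
        (fun s _ => (abs_le.mp (hMbound s)).1)
      rw [intervalIntegral.integral_const] at this
      have e : (T - ‖y‖) • (-M) = -M * (T - ‖y‖) := by rw [smul_eq_mul]; ring
      linarith [e ▸ this]
    have h2 : (ginf / 2) * (‖x + y‖ - T) ≤ ∫ s in T..‖x+y‖, g' s := by
      have := intervalIntegral.integral_mono_on hbT
        (intervalIntegrable_const (c := ginf / 2)) (hg'int T ‖x+y‖)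
        (fun s hs => hRg s (le_trans hTR hs.1))
      rw [intervalIntegral.integral_const] at this
      have e : (‖x + y‖ - T) • (ginf / 2) = (ginf / 2) * (‖x + y‖ - T) := by
        rw [smul_eq_mul]; ring
      linarith [e ▸ this]
    nlinarith [norm_nonneg x]
  -- eventual lower bound for the energy
  have hev : ∀ᶠ x in comap (fun x : V => ‖x‖) atTop,
      c * ‖x‖ - Cc ≤ ∫ y, (Gam g (x + y) - Gam g y) ∂μ := by
    have hmem : (fun x : V => ‖x‖) ⁻¹' (Ici (ρ + T)) ∈
        comap (fun x : V => ‖x‖) atTop := preimage_mem_comap (Ici_mem_atTop _)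
    filter_upwards [hmem] with x hx
    have hx : ρ + T ≤ ‖x‖ := hx
    have hr0 : (0:ℝ) ≤ ‖x‖ := norm_nonneg x
    set L : ℝ := (ginf / 2) * (‖x‖ - ρ - T) - M * T with hLdef
    have hsplit : ∫ y, (Gam g (x + y) - Gam g y) ∂μ
        = (∫ y in A, (Gam g (x + y) - Gam g y) ∂μ)
          + ∫ y in Aᶜ, (Gam g (x + y) - Gam g y) ∂μ :=
      (integral_add_compl hAmeas (hint x)).symm
    have hA_lb : -(M * ‖x‖) * t ≤ ∫ y in A, (Gam g (x + y) - Gam g y) ∂μ := by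
      refine setIntegral_ge_of_const_le_real hAmeas (measure_lt_top μ _).ne
        (fun y _ => ?_) ((hint x).integrableOn)
      have := (abs_le.mp (hkerbound x y)).1
      linarith
    have hAc_lb : L * a ≤ ∫ y in Aᶜ, (Gam g (x + y) - Gam g y) ∂μ := by
      refine setIntegral_ge_of_const_le_real hAmeas.compl (measure_lt_top μ _).ne
        (fun y hy => ?_) ((hint x).integrableOn)
      exact hgood x hx y hy
    have hMtr : M * ‖x‖ * t ≤ (ginf * m / 8) * ‖x‖ := by
      have hMne : M ≠ 0 := ne_of_gt hM0
      have h2 : M * t ≤ M * (ginf * m / (8 * M)) :=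
        mul_le_mul_of_nonneg_left (le_trans ht.le hεM) hM0.le
      have h3 : M * (ginf * m / (8 * M)) = ginf * m / 8 := by
        field_simp
      have h1 : M * t ≤ ginf * m / 8 := by rw [h3] at h2; exact h2
      nlinarith [mul_le_mul_of_nonneg_right h1 hr0]
    have hLa : c * ‖x‖ - Cc + (ginf * m / 8) * ‖x‖ ≤ L * a := by
      have e1 : (ginf / 4) * m * ‖x‖ ≤ (ginf / 2) * a * ‖x‖ := by
        nlinarith [mul_nonneg (mul_nonneg (by linarith : (0:ℝ) ≤ ginf / 2)
          (by linarith : (0:ℝ) ≤ a - m / 2)) hr0]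
      have e2 : (ginf / 2) * a * (ρ + T) ≤ (ginf / 2) * m * (ρ + T) := by
        nlinarith [mul_nonneg (mul_nonneg (by linarith : (0:ℝ) ≤ ginf / 2)
          (by linarith : (0:ℝ) ≤ m - a)) (by linarith : (0:ℝ) ≤ ρ + T)]
      have e3 : M * T * a ≤ M * T * m := by
        nlinarith [mul_nonneg (mul_nonneg hM0.le hT0) (by linarith : (0:ℝ) ≤ m - a)]
      have eL : L * a = (ginf / 2) * a * ‖x‖ - (ginf / 2) * a * (ρ + T) - M * T * a := by
        rw [hLdef]; ring
      rw [eL, hcdef, hCcdef]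
      nlinarith
    have hA_lb2 : -(M * ‖x‖ * t) ≤ ∫ y in A, (Gam g (x + y) - Gam g y) ∂μ := by
      have e : -(M * ‖x‖) * t = -(M * ‖x‖ * t) := by ring
      rw [e] at hA_lb
      exact hA_lb
    have h4 : -(M * ‖x‖ * t) + L * a
        ≤ (∫ y in A, (Gam g (x + y) - Gam g y) ∂μ)
          + ∫ y in Aᶜ, (Gam g (x + y) - Gam g y) ∂μ :=
      add_le_add hA_lb2 hAc_lb
    have h5 : c * ‖x‖ - Cc ≤ -(M * ‖x‖ * t) + L * a := by
      clear_value m M t a c T Cc L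
      linarith [hMtr, hLa]
    rw [hsplit]
    exact le_trans h5 h4
  refine tendsto_atTop_mono' _ hev ?_
  have h1 : Tendsto (fun r : ℝ => c * r - Cc) atTop atTop := by
    have h2 : Tendsto (fun r : ℝ => c * r) atTop atTop :=
      Tendsto.const_mul_atTop hc tendsto_id
    have h3 := tendsto_atTop_add_const_right atTop (-Cc) h2
    simpa [sub_eq_add_neg] using h3
  exact h1.comp tendsto_comap
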